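/- Let m ∈ ℕ with m ≥ 2, let a : ℤ → ℝ be a finitely supported mask, and let φ : ℝ → ℝ be a continuous, compactly supported function satisfying φ(x) = Σ_{k∈ℤ} a_k φ(mx − k + 1/2) for all x ∈ ℝ, with |φ(x)| + |φ̂(x)| ≤ C(1 + |x|)^{−1−ε} for some C, ε > 0, and satisfying the interpolation condition φ(n) = δ_{0,n} for all n ∈ ℤ. Then for every ω ∈ ℝ, writing z = e^{−πiω}, the following identity holds: 1/2 + Σ_{γ=0}^{m−1} Φ_{2,2γ+1}(z^m) = m z^{−1} ( Σ_{β=0,…,m−1 with 2β ≡ 1 (mod m)} A_β(z²)/2 + Σ_{β,γ=0,…,m−1 with 2(γ+β) ≡ 0 (mod m)} A_β(z²) Φ_{2,2γ+1}(z) ). -/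

import Mathlib

open Finset

private lemma sum_support_congr {M : Type*} [AddCommMonoid M] (g : ℤ → M) (s t : Finset ℤ)
    (hs : ∀ n, g n ≠ 0 → n ∈ s) (ht : ∀ n, g n ≠ 0 → n ∈ t) :
    ∑ n ∈ s, g n = ∑ n ∈ t, g n := by
  have h1 : ∑ n ∈ s, g n = ∑ n ∈ s ∪ t, g n :=
    Finset.sum_subset Finset.subset_union_left
      (fun x _ hx => by by_contra h; exact hx (hs x h))
  have h2 : ∑ n ∈ t, g n = ∑ n ∈ s ∪ t, g n :=
    Finset.sum_subset Finset.subset_union_right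
      (fun x _ hx => by by_contra h; exact hx (ht x h))
  rw [h1, h2]

private lemma finsum_eq_sum_support {M : Type*} [AddCommMonoid M] (g : ℤ → M) (s : Finset ℤ)
    (hs : ∀ n, g n ≠ 0 → n ∈ s) : ∑ᶠ n, g n = ∑ n ∈ s, g n :=
  finsum_eq_sum_of_support_subset g (fun n hn => hs n hn)

private lemma sum_residue {M : Type*} [AddCommMonoid M] (m : ℕ) (hm : 0 < m) (K : ℤ) (g : ℤ → M) :
    ∑ γ ∈ Finset.range m, ∑ q ∈ Finset.Icc (-K) K, g ((m : ℤ) * q + (γ : ℤ)) =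
      ∑ k ∈ Finset.Icc ((m : ℤ) * (-K)) ((m : ℤ) * K + (m : ℤ) - 1), g k := by
  have hm' : (0 : ℤ) < (m : ℤ) := by exact_mod_cast hm
  rw [← Finset.sum_product']
  refine Finset.sum_nbij' (fun p => (m : ℤ) * p.2 + (p.1 : ℤ))
    (fun k => ((k % (m : ℤ)).toNat, k / (m : ℤ))) ?_ ?_ ?_ ?_ ?_
  · rintro ⟨γ, q⟩ hp
    simp only [Finset.mem_product, Finset.mem_range, Finset.mem_Icc] at hp ⊢
    obtain ⟨h1, h2, h3⟩ := hp
    have hγ : (γ : ℤ) < m := by exact_mod_cast h1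
    have l1 : (m : ℤ) * (-K) ≤ (m : ℤ) * q :=
      mul_le_mul_of_nonneg_left h2 (le_of_lt hm')
    have l2 : (m : ℤ) * q ≤ (m : ℤ) * K :=
      mul_le_mul_of_nonneg_left h3 (le_of_lt hm')
    constructor
    · have : (0 : ℤ) ≤ γ := Int.natCast_nonneg γ
      linarith
    · linarith
  · intro k hk
    simp only [Finset.mem_Icc] at hk
    simp only [Finset.mem_product, Finset.mem_range, Finset.mem_Icc]
    have h0 : 0 ≤ k % (m : ℤ) := Int.emod_nonneg k (ne_of_gt hm')
    have h1 : k % (m : ℤ) < m := Int.emod_lt_of_pos k hm'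
    refine ⟨?_, ?_, ?_⟩
    · omega
    · rw [Int.le_ediv_iff_mul_le hm']
      linarith [hk.1]
    · have : k / (m : ℤ) < K + 1 := by
        rw [Int.ediv_lt_iff_lt_mul hm']
        linarith [hk.2]
      omega
  · rintro ⟨γ, q⟩ hp
    simp only [Finset.mem_product, Finset.mem_range] at hp
    have hγ : (γ : ℤ) < m := by exact_mod_cast hp.1
    have e1 : ((m : ℤ) * q + (γ : ℤ)) % (m : ℤ) = (γ : ℤ) := by
      rw [add_comm, Int.add_mul_emod_self_left]
      exact Int.emod_eq_of_lt (Int.natCast_nonneg γ) hγ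
    have e2 : ((m : ℤ) * q + (γ : ℤ)) / (m : ℤ) = q := by
      rw [add_comm, Int.add_mul_ediv_left _ _ (ne_of_gt hm'),
        Int.ediv_eq_zero_of_lt (Int.natCast_nonneg γ) hγ, zero_add]
    simp [e1, e2]
  · intro k hk
    simp only
    rw [Int.toNat_of_nonneg (Int.emod_nonneg k (ne_of_gt hm'))]
    rw [mul_comm]
    exact Int.ediv_mul_add_emod k (m : ℤ)
  · rintro ⟨γ, q⟩ _; rfl

private lemma sum_parity {M : Type*} [AddCommMonoid M] (K : ℤ) (g : ℤ → M) :
    ∑ q ∈ Finset.Icc (-K) K, g (2 * q) + ∑ q ∈ Finset.Icc (-K) K, g (2 * q + 1) =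
      ∑ k ∈ Finset.Icc (-(2 * K)) (2 * K + 1), g k := by
  have := sum_residue 2 (by norm_num) K g
  simp only [Finset.sum_range_succ, Finset.sum_range_one] at this
  push_cast at this
  rw [show (-(2 * K) : ℤ) = 2 * (-K) by ring, show (2 * K + 1 : ℤ) = 2 * K + 2 - 1 by ring]
  simpa using this

private lemma abs_le_of_mul_abs_le {m k C : ℤ} (hm : 1 ≤ m) (h : |m * k| ≤ C) : |k| ≤ C := by
  rw [abs_mul, abs_of_nonneg (by linarith : (0:ℤ) ≤ m)] at h
  nlinarith [abs_nonneg k]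

/-- The Fourier transform `φ̂(ω) = ∫ φ(x) e^{-2πixω} dx`. -/
noncomputable def fourierT (φ : ℝ → ℝ) (ω : ℝ) : ℂ :=
  ∫ x : ℝ, (φ x : ℂ) * Complex.exp (-(2 * (Real.pi : ℂ) * Complex.I * (x : ℂ) * (ω : ℂ)))

/-- The Laurent polynomial `Φ_{T,n}(z) = (1/T) Σ_k φ(mk + n/T) z^(mTk+n)`. -/
noncomputable def PhiSub (φ : ℝ → ℝ) (m T : ℕ) (n : ℤ) (z : ℂ) : ℂ :=
  (T : ℂ)⁻¹ * ∑ᶠ k : ℤ, (φ ((m : ℝ) * (k : ℝ) + (n : ℝ) / (T : ℝ)) : ℂ) * z ^ ((m : ℤ) * (T : ℤ) * k + n)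

/-- The sub-symbol `A_n(z) = (1/m) Σ_k a_{mk+n} z^(mk+n)` of the mask `a`. -/
noncomputable def ASub (a : ℤ → ℝ) (m : ℕ) (n : ℤ) (z : ℂ) : ℂ :=
  (m : ℂ)⁻¹ * ∑ᶠ k : ℤ, (a ((m : ℤ) * k + n) : ℂ) * z ^ ((m : ℤ) * k + n)

/-- Lemma 3.1: for a dual (`τ = 1/2`) interpolatory refinable `φ`,
`1/2 + Σ_γ Φ_{2,2γ+1}(z^m) = m z⁻¹ (Σ_{2β≡1 (m)} A_β(z²)/2 + Σ_{2(γ+β)≡0 (m)} A_β(z²) Φ_{2,2γ+1}(z))`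
where `z = e^{-πiω}`. -/
theorem dual_interpolatory_necessary_condition
    (m : ℕ) (hm : 2 ≤ m)
    (a : ℤ → ℝ) (ha : (Function.support a).Finite)
    (φ : ℝ → ℝ) (hφc : Continuous φ) (hφs : HasCompactSupport φ)
    (href : ∀ x : ℝ, φ x = ∑ᶠ k : ℤ, a k * φ ((m : ℝ) * x - (k : ℝ) + 1 / 2))
    (hdecay : ∃ C ε : ℝ, 0 < C ∧ 0 < ε ∧
      ∀ x : ℝ, |φ x| + ‖fourierT φ x‖ ≤ C * (1 + |x|) ^ (-1 - ε))
    (hint : ∀ n : ℤ, φ (n : ℝ) = if n = 0 then 1 else 0) :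
    ∀ ω : ℝ, ∀ z : ℂ, z = Complex.exp (-((Real.pi : ℂ) * Complex.I * (ω : ℂ))) →
      1 / 2 + ∑ γ ∈ Finset.range m, PhiSub φ m 2 (2 * (γ : ℤ) + 1) (z ^ m) =
        (m : ℂ) * z⁻¹ *
          ((∑ β ∈ (Finset.range m).filter (fun β => (2 * β) % m = 1 % m),
              ASub a m (β : ℤ) (z ^ 2) / 2) +
           ∑ β ∈ Finset.range m,
             ∑ γ ∈ (Finset.range m).filter (fun γ => (2 * (γ + β)) % m = 0),
               ASub a m (β : ℤ) (z ^ 2) * PhiSub φ m 2 (2 * (γ : ℤ) + 1) z) := by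
  intro ω z hz
  have hz0 : z ≠ 0 := by rw [hz]; exact Complex.exp_ne_zero _
  have hmpos : 0 < m := by omega
  have hm1 : (1 : ℤ) ≤ (m : ℤ) := by exact_mod_cast Nat.one_le_of_lt hm
  have hmC : (m : ℂ) ≠ 0 := Nat.cast_ne_zero.mpr (by omega)
  -- support bound for φ
  obtain ⟨Rb, hRb⟩ : ∃ R : ℝ, ∀ x : ℝ, φ x ≠ 0 → |x| ≤ R := by
    obtain ⟨r, hr⟩ := (hφs : IsCompact (tsupport φ)).isBounded.subset_closedBall 0
    refine ⟨r, fun x hx => ?_⟩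
    have := hr (subset_tsupport φ hx)
    simpa [Real.dist_eq] using this
  -- c : the half-integer samples of φ, as complex numbers
  set c : ℤ → ℂ := fun n => ((φ ((n : ℝ) / 2) : ℝ) : ℂ) with hcdef
  set b : ℤ → ℂ := fun k => ((a k : ℝ) : ℂ) with hbdef
  set Nc : ℕ := ⌈2 * Rb⌉₊ with hNcdef
  have hcsupp : ∀ n : ℤ, c n ≠ 0 → |n| ≤ (Nc : ℤ) := by
    intro n hn
    have hφn : φ ((n : ℝ) / 2) ≠ 0 := fun h => hn (by simp [hcdef, h])
    have h1 : |(n : ℝ) / 2| ≤ Rb := hRb _ hφn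
    have h2 : |(n : ℝ)| ≤ 2 * Rb := by
      rw [abs_div] at h1
      have : |(2 : ℝ)| = 2 := by norm_num
      rw [this] at h1
      linarith
    have h3 : (2 : ℝ) * Rb ≤ (Nc : ℝ) := Nat.le_ceil _
    have h4 : |(n : ℝ)| ≤ (Nc : ℝ) := le_trans h2 h3
    have h5 : ((|n| : ℤ) : ℝ) ≤ ((Nc : ℤ) : ℝ) := by push_cast; rw [← Int.cast_abs] at h4; exact_mod_cast h4
    exact_mod_cast h5
  set Na : ℕ := ha.toFinset.sup (fun k => k.natAbs) with hNadef
  have hbsupp : ∀ k : ℤ, b k ≠ 0 → |k| ≤ (Na : ℤ) := by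
    intro k hk
    have hak : a k ≠ 0 := fun h => hk (by simp [hbdef, h])
    have h := Finset.le_sup (f := fun k => k.natAbs) (ha.mem_toFinset.mpr hak)
    rw [Int.abs_eq_natAbs]
    exact_mod_cast h
  set K : ℤ := (Na : ℤ) + (Nc : ℤ) + 2 * (m : ℤ) + 5 with hKdef
  set L : ℤ := (Nc : ℤ) + 2 * K + 5 with hLdef
  have hNa0 : (0:ℤ) ≤ (Na:ℤ) := Int.natCast_nonneg _
  have hNc0 : (0:ℤ) ≤ (Nc:ℤ) := Int.natCast_nonneg _
  have hK0 : 0 ≤ K := by rw [hKdef]; omega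
  have hL0 : 0 ≤ L := by rw [hLdef]; omega
  have hKmK : K ≤ (m : ℤ) * K := le_mul_of_one_le_left hK0 hm1
  set IK : Finset ℤ := Finset.Icc (-K) K with hIKdef
  set IL : Finset ℤ := Finset.Icc (-L) L with hILdef
  set P2 : Finset ℤ := Finset.Icc (-(2 * L)) (2 * L + 1) with hP2def
  set RR : Finset ℤ := Finset.Icc ((m : ℤ) * (-K)) ((m : ℤ) * K + (m : ℤ) - 1) with hRRdef
  -- even samples are Kronecker delta
  have hceven : ∀ j : ℤ, c (2 * j) = if j = 0 then 1 else 0 := by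
    intro j
    have harg : ((2 * j : ℤ) : ℝ) / 2 = ((j : ℤ) : ℝ) := by push_cast; ring
    rw [hcdef]
    simp only [harg, hint j]
    split <;> simp
  have hmemIK : ∀ k : ℤ, |k| ≤ K → k ∈ IK := by
    intro k hk
    rw [hIKdef, Finset.mem_Icc]
    exact abs_le.mp hk
  have hNaK : (Na : ℤ) ≤ K := by rw [hKdef]; omega
  have hNcK : (Nc : ℤ) ≤ K := by rw [hKdef]; omega
  -- the refinement equation in sampled form
  have hrec : ∀ p : ℤ, c p = ∑ k ∈ IK, b k * c ((m : ℤ) * p - 2 * k + 1) := by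
    intro p
    have harg : ∀ k : ℤ, (m : ℝ) * ((p : ℝ) / 2) - (k : ℝ) + 1 / 2
        = (((m : ℤ) * p - 2 * k + 1 : ℤ) : ℝ) / 2 := by intro k; push_cast; ring
    have h := href ((p : ℝ) / 2)
    simp only [harg] at h
    have h2 : ∑ᶠ k : ℤ, a k * φ ((((m : ℤ) * p - 2 * k + 1 : ℤ) : ℝ) / 2)
        = ∑ k ∈ IK, a k * φ ((((m : ℤ) * p - 2 * k + 1 : ℤ) : ℝ) / 2) := by
      apply finsum_eq_sum_support
      intro k hk
      have hak : a k ≠ 0 := by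
        intro h0
        rw [h0, zero_mul] at hk
        exact hk rfl
      have hka : |k| ≤ (Na : ℤ) := hbsupp k (by
        rw [hbdef]; exact Complex.ofReal_ne_zero.mpr hak)
      exact hmemIK k (le_trans hka hNaK)
    rw [h2] at h
    rw [hcdef]
    simp only
    rw [h]
    push_cast
    apply Finset.sum_congr rfl
    intro k _
    rfl
  have hPhi : ∀ γ : ℕ, γ < m → ∀ y : ℂ, PhiSub φ m 2 (2 * (γ : ℤ) + 1) y
      = (2 : ℂ)⁻¹ * ∑ k ∈ IK,
          c (2 * ((m : ℤ) * k + (γ : ℤ)) + 1) * y ^ ((m : ℤ) * 2 * k + (2 * (γ : ℤ) + 1)) := by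
    intro γ hγ y
    rw [PhiSub]
    congr 1
    have harg : ∀ k : ℤ, (m : ℝ) * (k : ℝ) + ((2 * (γ : ℤ) + 1 : ℤ) : ℝ) / ((2 : ℕ) : ℝ)
        = ((2 * ((m : ℤ) * k + (γ : ℤ)) + 1 : ℤ) : ℝ) / 2 := by
      intro k; push_cast; ring
    have hexp : ∀ k : ℤ, (m : ℤ) * ((2 : ℕ) : ℤ) * k + (2 * (γ : ℤ) + 1)
        = (m : ℤ) * 2 * k + (2 * (γ : ℤ) + 1) := by intro k; push_cast; ring
    have hbound : ∀ k : ℤ, c (2 * ((m : ℤ) * k + (γ : ℤ)) + 1) ≠ 0 → k ∈ IK := by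
      intro k hk
      have h1 := hcsupp _ hk
      have hγ' : (γ : ℤ) ≤ (m : ℤ) - 1 := by
        have : (γ : ℤ) < (m : ℤ) := by exact_mod_cast hγ
        omega
      have hγ0 : (0 : ℤ) ≤ (γ : ℤ) := Int.natCast_nonneg γ
      have h2 : |(m : ℤ) * k| ≤ (Nc : ℤ) + 2 * (m : ℤ) := by
        rw [abs_le]
        obtain ⟨ha1, ha2⟩ := abs_le.mp h1
        constructor <;> omega
      have h3 : |k| ≤ (Nc : ℤ) + 2 * (m : ℤ) := abs_le_of_mul_abs_le hm1 h2
      apply hmemIK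
      rw [hKdef] at *
      omega
    rw [finsum_eq_sum_support _ IK (fun k hk => by
      apply hbound k
      intro h0
      apply hk
      rw [hcdef] at h0
      simp only at h0
      have : ((φ ((m : ℝ) * (k : ℝ) + ((2 * (γ : ℤ) + 1 : ℤ) : ℝ) / ((2 : ℕ) : ℝ))) : ℂ) = 0 := by
        rw [harg k]; exact h0
      rw [this, zero_mul])]
    apply Finset.sum_congr rfl
    intro k _
    rw [hcdef]
    simp only
    rw [harg k, hexp k]
  have hA : ∀ β : ℕ, β < m → ASub a m (β : ℤ) (z ^ 2)
      = (m : ℂ)⁻¹ * ∑ q ∈ IK, b ((m : ℤ) * q + (β : ℤ)) * z ^ (2 * ((m : ℤ) * q + (β : ℤ))) := by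
    intro β hβ
    rw [ASub]
    congr 1
    have hbound : ∀ q : ℤ, b ((m : ℤ) * q + (β : ℤ)) ≠ 0 → q ∈ IK := by
      intro q hq
      have h1 := hbsupp _ hq
      have hβ' : (β : ℤ) ≤ (m : ℤ) - 1 := by
        have : (β : ℤ) < (m : ℤ) := by exact_mod_cast hβ
        omega
      have hβ0 : (0 : ℤ) ≤ (β : ℤ) := Int.natCast_nonneg β
      have h2 : |(m : ℤ) * q| ≤ (Na : ℤ) + (m : ℤ) := by
        rw [abs_le]
        obtain ⟨ha1, ha2⟩ := abs_le.mp h1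
        constructor <;> omega
      have h3 : |q| ≤ (Na : ℤ) + (m : ℤ) := abs_le_of_mul_abs_le hm1 h2
      apply hmemIK
      rw [hKdef] at *
      omega
    rw [finsum_eq_sum_support _ IK (fun q hq => by
      apply hbound q
      intro h0
      apply hq
      rw [hbdef] at h0
      simp only at h0
      rw [h0, zero_mul])]
    apply Finset.sum_congr rfl
    intro q _
    rw [hbdef]
    simp only
    rw [← zpow_natCast z 2, ← zpow_mul]
    norm_num
  have hzm : ∀ e : ℤ, (z ^ m) ^ e = z ^ ((m : ℤ) * e) := by
    intro e; rw [← zpow_natCast z m, ← zpow_mul]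
  have hNcL : (Nc : ℤ) ≤ L := by rw [hLdef, hKdef]; omega
  have hsum1 : ∑ γ ∈ Finset.range m, PhiSub φ m 2 (2 * (γ : ℤ) + 1) (z ^ m)
      = (2 : ℂ)⁻¹ * ∑ n ∈ IL, c (2 * n + 1) * z ^ ((m : ℤ) * (2 * n + 1)) := by
    have step1 : ∀ γ ∈ Finset.range m, PhiSub φ m 2 (2 * (γ : ℤ) + 1) (z ^ m)
        = (2 : ℂ)⁻¹ * ∑ k ∈ Finset.Icc (-K) K,
            (fun n => c (2 * n + 1) * z ^ ((m : ℤ) * (2 * n + 1))) ((m : ℤ) * k + (γ : ℤ)) := by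
      intro γ hγ
      rw [hPhi γ (Finset.mem_range.mp hγ) (z ^ m)]
      rw [hIKdef]
      congr 1
      apply Finset.sum_congr rfl
      intro k _
      simp only
      rw [hzm]
      congr 2
      ring
    rw [Finset.sum_congr rfl step1, ← Finset.mul_sum]
    congr 1
    rw [sum_residue m hmpos K (fun n => c (2 * n + 1) * z ^ ((m : ℤ) * (2 * n + 1)))]
    apply sum_support_congr
    · intro n hn
      have hc1 : c (2 * n + 1) ≠ 0 := by
        intro h0; apply hn; simp only [h0, zero_mul]
      have h1 := hcsupp _ hc1
      have h2 : |n| ≤ (Nc : ℤ) := by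
        obtain ⟨ha1, ha2⟩ := abs_le.mp h1
        rw [abs_le]; omega
      rw [Finset.mem_Icc]
      obtain ⟨ha1, ha2⟩ := abs_le.mp h2
      have hmk : (m : ℤ) * -K = -((m : ℤ) * K) := by ring
      rw [hmk]
      omega
    · intro n hn
      have hc1 : c (2 * n + 1) ≠ 0 := by
        intro h0; apply hn; simp only [h0, zero_mul]
      have h1 := hcsupp _ hc1
      have h2 : |n| ≤ (Nc : ℤ) := by
        obtain ⟨ha1, ha2⟩ := abs_le.mp h1
        rw [abs_le]; omega
      rw [hILdef, Finset.mem_Icc]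
      obtain ⟨ha1, ha2⟩ := abs_le.mp h2
      omega
  have hone : (1 : ℂ) / 2 = (2 : ℂ)⁻¹ * ∑ n ∈ IL, c (2 * n) * z ^ ((m : ℤ) * (2 * n)) := by
    have hsum0 : ∑ n ∈ IL, c (2 * n) * z ^ ((m : ℤ) * (2 * n)) = 1 := by
      have hc0 : c 0 = 1 := by
        have h00 := hceven 0
        norm_num at h00
        exact h00
      rw [Finset.sum_eq_single_of_mem 0 (by rw [hILdef, Finset.mem_Icc]; omega)]
      · simp [hc0]
      · intro n _ hn
        rw [hceven n, if_neg hn, zero_mul]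
    rw [hsum0, mul_one]
    norm_num
  have hLHS : (1 : ℂ) / 2 + ∑ γ ∈ Finset.range m, PhiSub φ m 2 (2 * (γ : ℤ) + 1) (z ^ m)
      = (2 : ℂ)⁻¹ * ∑ p ∈ P2, c p * z ^ ((m : ℤ) * p) := by
    rw [hone, hsum1, ← mul_add]
    congr 1
    rw [hILdef, hP2def]
    exact sum_parity L (fun p => c p * z ^ ((m : ℤ) * p))
  have hLHS2 : (2 : ℂ)⁻¹ * ∑ p ∈ P2, c p * z ^ ((m : ℤ) * p)
      = (2 : ℂ)⁻¹ * ∑ k ∈ IK, (b k * z ^ (2 * k - 1)) *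
          ∑ p ∈ P2, c ((m : ℤ) * p - 2 * k + 1) * z ^ ((m : ℤ) * p - 2 * k + 1) := by
    apply congrArg ((2 : ℂ)⁻¹ * ·)
    have e1 : ∑ p ∈ P2, c p * z ^ ((m : ℤ) * p)
        = ∑ p ∈ P2, ∑ k ∈ IK, (b k * z ^ (2 * k - 1)) *
            (c ((m : ℤ) * p - 2 * k + 1) * z ^ ((m : ℤ) * p - 2 * k + 1)) := by
      apply Finset.sum_congr rfl
      intro p _
      rw [hrec p, Finset.sum_mul]
      apply Finset.sum_congr rfl
      intro k _
      rw [show (m : ℤ) * p = (2 * k - 1) + ((m : ℤ) * p - 2 * k + 1) by ring, zpow_add₀ hz0]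
      ring_nf
    rw [e1, Finset.sum_comm]
    exact Finset.sum_congr rfl (fun k _ => (Finset.mul_sum _ _ _).symm)
  -- divisibility reformulations of the mod-conditions
  have hcond1 : ∀ β : ℕ, ((2 * β) % m = 1 % m) ↔ ((m : ℤ) ∣ 2 * (β : ℤ) - 1) := by
    intro β
    have h1 : ((2 * β) % m = 1 % m) ↔ (m : ℤ) ∣ ((1 : ℕ) : ℤ) - ((2 * β : ℕ) : ℤ) :=
      Nat.modEq_iff_dvd
    rw [h1, dvd_sub_comm]
    push_cast
    rfl
  have hcond2 : ∀ γ β : ℕ, ((2 * (γ + β)) % m = 0) ↔ ((m : ℤ) ∣ 2 * ((γ : ℤ) + (β : ℤ))) := by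
    intro γ β
    rw [show ((2 * (γ + β)) % m = 0) ↔ m ∣ (2 * (γ + β)) from (Nat.dvd_iff_mod_eq_zero).symm,
      ← Int.natCast_dvd_natCast]
    push_cast
    rfl
  have hshift : ∀ d t : ℤ, ((m : ℤ) ∣ (m : ℤ) * t + d) ↔ ((m : ℤ) ∣ d) :=
    fun d t => dvd_add_right ⟨t, rfl⟩
  -- the key per-k identity
  have hKEY : ∀ k ∈ IK,
      (∑ p ∈ P2, c ((m : ℤ) * p - 2 * k + 1) * z ^ ((m : ℤ) * p - 2 * k + 1))
      = (if (m : ℤ) ∣ 2 * k - 1 then 1 else 0)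
        + ∑ r ∈ RR, (if (m : ℤ) ∣ 2 * (k + r) then c (2 * r + 1) * z ^ (2 * r + 1) else 0) := by
    intro k hk
    have hkK : |k| ≤ K := by rw [hIKdef, Finset.mem_Icc] at hk; rw [abs_le]; exact hk
    obtain ⟨hk1, hk2⟩ := abs_le.mp hkK
    set f : ℤ → ℂ := fun n => if (m : ℤ) ∣ n + (2 * k - 1) then c n * z ^ n else 0 with hfdef
    have step1 : ∑ p ∈ P2, c ((m : ℤ) * p - 2 * k + 1) * z ^ ((m : ℤ) * p - 2 * k + 1)
        = ∑ p ∈ P2, f ((m : ℤ) * p - 2 * k + 1) := by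
      apply Finset.sum_congr rfl
      intro p _
      rw [hfdef]
      simp only
      rw [if_pos ⟨p, by ring⟩]
    have hinj : ∀ x ∈ P2, ∀ y ∈ P2, (m : ℤ) * x - 2 * k + 1 = (m : ℤ) * y - 2 * k + 1 → x = y := by
      intro x _ y _ hxy
      have h2 : (m : ℤ) * x = (m : ℤ) * y := by omega
      exact mul_left_cancel₀ (by exact_mod_cast (by omega : (m : ℤ) ≠ 0)) h2
    have step2 : ∑ p ∈ P2, f ((m : ℤ) * p - 2 * k + 1)
        = ∑ n ∈ P2.image (fun p => (m : ℤ) * p - 2 * k + 1), f n := (Finset.sum_image hinj).symm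
    have hfc : ∀ n : ℤ, f n ≠ 0 → (c n ≠ 0 ∧ (m : ℤ) ∣ n + (2 * k - 1)) := by
      intro n hn
      constructor
      · intro h0
        apply hn
        rw [hfdef]
        simp only [h0, zero_mul, ite_self]
      · by_contra hcon
        rw [hfdef] at hn
        simp only [if_neg hcon] at hn
        exact hn rfl
    have step3 : ∑ n ∈ P2.image (fun p => (m : ℤ) * p - 2 * k + 1), f n = ∑ n ∈ P2, f n := by
      apply sum_support_congr
      · intro n hn
        obtain ⟨hcn, hdvd⟩ := hfc n hn
        have hnNc := abs_le.mp (hcsupp n hcn)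
        obtain ⟨p, hp⟩ := hdvd
        have hpm : |(m : ℤ) * p| ≤ (Nc : ℤ) + 2 * K + 1 := by
          rw [← hp, abs_le]
          omega
        have hpb := abs_le.mp (abs_le_of_mul_abs_le hm1 hpm)
        rw [Finset.mem_image]
        refine ⟨p, ?_, by omega⟩
        rw [hP2def, Finset.mem_Icc]
        omega
      · intro n hn
        obtain ⟨hcn, _⟩ := hfc n hn
        have hnNc := abs_le.mp (hcsupp n hcn)
        rw [hP2def, Finset.mem_Icc]
        omega
    have step4 : ∑ n ∈ P2, f n = (∑ q ∈ IL, f (2 * q)) + ∑ q ∈ IL, f (2 * q + 1) := by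
      rw [hP2def, hILdef]
      exact (sum_parity L f).symm
    have step5 : ∑ q ∈ IL, f (2 * q) = (if (m : ℤ) ∣ 2 * k - 1 then 1 else 0) := by
      have hc0 : c 0 = 1 := by
        have h00 := hceven 0
        norm_num at h00
        exact h00
      rw [Finset.sum_eq_single_of_mem 0 (by rw [hILdef, Finset.mem_Icc]; omega)]
      · rw [hfdef]
        simp only
        norm_num [hc0]
      · intro q _ hq
        rw [hfdef]
        simp only
        rw [hceven q, if_neg hq]
        simp
    have step6 : ∑ q ∈ IL, f (2 * q + 1)
        = ∑ r ∈ RR, (if (m : ℤ) ∣ 2 * (k + r) then c (2 * r + 1) * z ^ (2 * r + 1) else 0) := by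
      have hcongr : ∀ q : ℤ, f (2 * q + 1)
          = (if (m : ℤ) ∣ 2 * (k + q) then c (2 * q + 1) * z ^ (2 * q + 1) else 0) := by
        intro q
        rw [hfdef]
        simp only
        have hiff : ((m : ℤ) ∣ 2 * q + 1 + (2 * k - 1)) ↔ ((m : ℤ) ∣ 2 * (k + q)) := by
          rw [show 2 * q + 1 + (2 * k - 1) = 2 * (k + q) by ring]
        exact if_congr hiff rfl rfl
      rw [Finset.sum_congr rfl (fun q _ => hcongr q)]
      apply sum_support_congr
      · intro r hr
        have hcr : c (2 * r + 1) ≠ 0 := by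
          intro h0
          apply hr
          simp [h0]
        have h1 := abs_le.mp (hcsupp _ hcr)
        rw [hILdef, Finset.mem_Icc]
        omega
      · intro r hr
        have hcr : c (2 * r + 1) ≠ 0 := by
          intro h0
          apply hr
          simp [h0]
        have h1 := abs_le.mp (hcsupp _ hcr)
        rw [hRRdef, Finset.mem_Icc, show (m : ℤ) * -K = -((m : ℤ) * K) by ring]
        omega
    rw [step1, step2, step3, step4, step5, step6]
  -- RHS: first term
  have hT1 : ∑ β ∈ (Finset.range m).filter (fun β => (2 * β) % m = 1 % m),
        ASub a m (β : ℤ) (z ^ 2) / 2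
      = (m : ℂ)⁻¹ * (2 : ℂ)⁻¹ *
          ∑ k ∈ IK, b k * z ^ (2 * k) * (if (m : ℤ) ∣ 2 * k - 1 then 1 else 0) := by
    rw [Finset.sum_filter]
    have e1 : ∀ β ∈ Finset.range m,
        (if (2 * β) % m = 1 % m then ASub a m (β : ℤ) (z ^ 2) / 2 else 0)
        = (m : ℂ)⁻¹ * (2 : ℂ)⁻¹ * ∑ q ∈ IK,
            (fun n => b n * z ^ (2 * n) * (if (m : ℤ) ∣ 2 * n - 1 then 1 else 0))
              ((m : ℤ) * q + (β : ℤ)) := by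
      intro β hβ
      have hiff : ∀ q : ℤ, ((2 * β) % m = 1 % m) ↔ ((m : ℤ) ∣ 2 * ((m : ℤ) * q + (β : ℤ)) - 1) := by
        intro q
        rw [hcond1 β,
          show 2 * ((m : ℤ) * q + (β : ℤ)) - 1 = (m : ℤ) * (2 * q) + (2 * (β : ℤ) - 1) by ring,
          hshift]
      by_cases hc : (2 * β) % m = 1 % m
      · rw [if_pos hc, hA β (Finset.mem_range.mp hβ)]
        have hsum : ∑ q ∈ IK, b ((m : ℤ) * q + (β : ℤ)) * z ^ (2 * ((m : ℤ) * q + (β : ℤ)))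
            = ∑ q ∈ IK, (fun n => b n * z ^ (2 * n) * (if (m : ℤ) ∣ 2 * n - 1 then 1 else 0))
                ((m : ℤ) * q + (β : ℤ)) := by
          apply Finset.sum_congr rfl
          intro q _
          simp only
          rw [if_pos ((hiff q).mp hc), mul_one]
        rw [hsum]
        ring
      · rw [if_neg hc]
        symm
        rw [mul_eq_zero]
        right
        apply Finset.sum_eq_zero
        intro q _
        simp only
        rw [if_neg (fun hd => hc ((hiff q).mpr hd)), mul_zero]
    rw [Finset.sum_congr rfl e1, ← Finset.mul_sum]
    congr 1
    rw [hIKdef, sum_residue m hmpos K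
      (fun n => b n * z ^ (2 * n) * (if (m : ℤ) ∣ 2 * n - 1 then 1 else 0))]
    apply sum_support_congr
    · intro n hn
      have hbn : b n ≠ 0 := by
        intro h0
        apply hn
        simp [h0]
      have h1 := abs_le.mp (hbsupp n hbn)
      rw [Finset.mem_Icc, show (m : ℤ) * -K = -((m : ℤ) * K) by ring]
      omega
    · intro n hn
      have hbn : b n ≠ 0 := by
        intro h0
        apply hn
        simp [h0]
      have h1 := abs_le.mp (hbsupp n hbn)
      rw [Finset.mem_Icc]
      omega
  -- RHS: second (double) term
  have hT2 : ∑ β ∈ Finset.range m, ∑ γ ∈ (Finset.range m).filter (fun γ => (2 * (γ + β)) % m = 0),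
        ASub a m (β : ℤ) (z ^ 2) * PhiSub φ m 2 (2 * (γ : ℤ) + 1) z
      = (m : ℂ)⁻¹ * (2 : ℂ)⁻¹ * ∑ k ∈ IK, ∑ r ∈ RR,
          b k * z ^ (2 * k) *
            (if (m : ℤ) ∣ 2 * (k + r) then c (2 * r + 1) * z ^ (2 * r + 1) else 0) := by
    have e1 : ∀ β ∈ Finset.range m,
        ∑ γ ∈ (Finset.range m).filter (fun γ => (2 * (γ + β)) % m = 0),
            ASub a m (β : ℤ) (z ^ 2) * PhiSub φ m 2 (2 * (γ : ℤ) + 1) z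
        = (m : ℂ)⁻¹ * (2 : ℂ)⁻¹ * ∑ q ∈ IK,
            (fun n => ∑ r ∈ RR, b n * z ^ (2 * n) *
              (if (m : ℤ) ∣ 2 * (n + r) then c (2 * r + 1) * z ^ (2 * r + 1) else 0))
              ((m : ℤ) * q + (β : ℤ)) := by
      intro β hβ
      rw [Finset.sum_filter]
      have e2 : ∀ γ ∈ Finset.range m,
          (if (2 * (γ + β)) % m = 0 then
              ASub a m (β : ℤ) (z ^ 2) * PhiSub φ m 2 (2 * (γ : ℤ) + 1) z else 0)
          = (m : ℂ)⁻¹ * (2 : ℂ)⁻¹ * ∑ q ∈ IK, ∑ l ∈ IK,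
              (fun n r => b n * z ^ (2 * n) *
                (if (m : ℤ) ∣ 2 * (n + r) then c (2 * r + 1) * z ^ (2 * r + 1) else 0))
                ((m : ℤ) * q + (β : ℤ)) ((m : ℤ) * l + (γ : ℤ)) := by
        intro γ hγ
        have hiff : ∀ q l : ℤ, ((2 * (γ + β)) % m = 0)
            ↔ ((m : ℤ) ∣ 2 * (((m : ℤ) * q + (β : ℤ)) + ((m : ℤ) * l + (γ : ℤ)))) := by
          intro q l
          rw [hcond2 γ β,
            show 2 * (((m : ℤ) * q + (β : ℤ)) + ((m : ℤ) * l + (γ : ℤ)))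
              = (m : ℤ) * (2 * q + 2 * l) + 2 * ((γ : ℤ) + (β : ℤ)) by ring,
            hshift]
        by_cases hcon : (2 * (γ + β)) % m = 0
        · rw [if_pos hcon, hA β (Finset.mem_range.mp hβ), hPhi γ (Finset.mem_range.mp hγ) z,
            mul_mul_mul_comm, Finset.sum_mul_sum]
          refine congrArg (((m : ℂ)⁻¹ * (2 : ℂ)⁻¹) * ·) ?_
          apply Finset.sum_congr rfl
          intro q _
          apply Finset.sum_congr rfl
          intro l _
          simp only
          rw [if_pos ((hiff q l).mp hcon),
            show (m : ℤ) * 2 * l + (2 * (γ : ℤ) + 1) = 2 * ((m : ℤ) * l + (γ : ℤ)) + 1 by ring]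
        · rw [if_neg hcon]
          symm
          rw [mul_eq_zero]
          right
          apply Finset.sum_eq_zero
          intro q _
          apply Finset.sum_eq_zero
          intro l _
          simp only
          rw [if_neg (fun hd => hcon ((hiff q l).mpr hd)), mul_zero]
      rw [Finset.sum_congr rfl e2, ← Finset.mul_sum]
      congr 1
      rw [Finset.sum_comm]
      apply Finset.sum_congr rfl
      intro q _
      exact sum_residue m hmpos K
        (fun r => b ((m : ℤ) * q + (β : ℤ)) * z ^ (2 * ((m : ℤ) * q + (β : ℤ))) *
          (if (m : ℤ) ∣ 2 * (((m : ℤ) * q + (β : ℤ)) + r)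
            then c (2 * r + 1) * z ^ (2 * r + 1) else 0))
    rw [Finset.sum_congr rfl e1, ← Finset.mul_sum]
    congr 1
    rw [hIKdef, sum_residue m hmpos K
      (fun n => ∑ r ∈ RR, b n * z ^ (2 * n) *
        (if (m : ℤ) ∣ 2 * (n + r) then c (2 * r + 1) * z ^ (2 * r + 1) else 0))]
    apply sum_support_congr
    · intro n hn
      have hbn : b n ≠ 0 := by
        intro h0
        apply hn
        apply Finset.sum_eq_zero
        intro r _
        simp [h0]
      have h1 := abs_le.mp (hbsupp n hbn)
      rw [Finset.mem_Icc, show (m : ℤ) * -K = -((m : ℤ) * K) by ring]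
      omega
    · intro n hn
      have hbn : b n ≠ 0 := by
        intro h0
        apply hn
        apply Finset.sum_eq_zero
        intro r _
        simp [h0]
      have h1 := abs_le.mp (hbsupp n hbn)
      rw [Finset.mem_Icc]
      omega
  -- final assembly
  have hzz : ∀ k : ℤ, z ^ (2 * k - 1) = z ^ (2 * k) * z⁻¹ := by
    intro k
    rw [show 2 * k - 1 = 2 * k + (-1) by ring, zpow_add₀ hz0, zpow_neg_one]
  rw [hLHS, hLHS2, hT1, hT2, ← mul_add ((m : ℂ)⁻¹ * (2 : ℂ)⁻¹), ← Finset.sum_add_distrib]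
  have halg : ∀ S : ℂ, (m : ℂ) * z⁻¹ * ((m : ℂ)⁻¹ * (2 : ℂ)⁻¹ * S) = (2 : ℂ)⁻¹ * (z⁻¹ * S) := by
    intro S
    field_simp
  rw [halg]
  refine congrArg ((2 : ℂ)⁻¹ * ·) ?_
  rw [Finset.mul_sum]
  apply Finset.sum_congr rfl
  intro k hk
  rw [hKEY k hk, ← Finset.mul_sum, ← mul_add (b k * z ^ (2 * k)), hzz k]
  ring
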